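/- Let G be a finite abelian group with a perfect alternating biadditive pairing B : G → G → ℝ/ℤ, and let L₁, L₂, L₃ ≤ G be Lagrangian subgroups. Set S₂ := L₂ ⊓ (L₁ ⊔ L₃) and let (p₁, p₃) be a splitting pair for S₂ (additive homomorphisms p₁, p₃ : S₂ →+ G with p₁ k ∈ L₁, p₃ k ∈ L₃, k = p₁ k + p₃ k). Then for all k, k' ∈ S₂: (i) B (p₁ k) (p₃ k') = B k (p₃ k') = B (p₁ k) k'; (ii) B k (p₃ k') = B k' (p₃ k) (the pairing B₃₂₁(k,k') := B (p₁ k) (p₃ k') is symmetric); and (iii) if B k (p₃ k') = 0 for every k' ∈ S₂, then k ∈ (L₁ ⊓ L₂) ⊔ (L₂ ⊓ L₃). Consequently B₃₂₁ induces a non-degenerate symmetric pairing on U₂ := S₂ ⧸ ((L₁ ⊓ L₂) ⊔ (L₂ ⊓ L₃)). -/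

import Mathlib

-- character into real circle
lemma exists_char_real {A : Type*} [AddCommGroup A] {a : A} (ha : a ≠ 0) :
    ∃ c : A →+ AddCircle (1 : ℝ), c a ≠ 0 := by
  obtain ⟨c, hc⟩ := CharacterModule.exists_character_apply_ne_zero_of_ne_zero ha
  have hle : AddSubgroup.zmultiples (1 : ℚ) ≤
      (AddSubgroup.zmultiples (1 : ℝ)).comap (Rat.castHom ℝ).toAddMonoidHom := by
    rintro x ⟨n, rfl⟩
    exact ⟨n, by push_cast; simp⟩
  set ι : AddCircle (1 : ℚ) →+ AddCircle (1 : ℝ) :=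
    QuotientAddGroup.map _ _ (Rat.castHom ℝ).toAddMonoidHom hle
  have hinj : Function.Injective ι := by
    rw [injective_iff_map_eq_zero]
    intro x hx
    induction x using QuotientAddGroup.induction_on with
    | H q =>
      rw [QuotientAddGroup.map_mk] at hx; rw [QuotientAddGroup.eq_zero_iff] at hx ⊢
      obtain ⟨n, hn⟩ := hx
      refine ⟨n, ?_⟩
      have : ((n : ℚ) : ℝ) = (q : ℝ) := by simpa using hn
      have := Rat.cast_injective (α := ℝ) this
      simpa using this
  exact ⟨ι.comp (c : A →+ AddCircle (1:ℚ)), fun h => hc (hinj (by rw [map_zero]; exact h))⟩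

section Perp
variable {G : Type*} [AddCommGroup G] (B : G →+ G →+ AddCircle (1 : ℝ))

def myPerp (H : AddSubgroup G) : AddSubgroup G where
  carrier := {x | ∀ h ∈ H, B x h = 0}
  zero_mem' := by intro h hh; simp
  add_mem' := by
    intro a b ha hb h hh
    rw [map_add, AddMonoidHom.add_apply, ha h hh, hb h hh, add_zero]
  neg_mem' := by
    intro a ha h hh
    rw [map_neg, AddMonoidHom.neg_apply, ha h hh, neg_zero]

lemma mem_myPerp {H : AddSubgroup G} {x : G} : x ∈ myPerp B H ↔ ∀ h ∈ H, B x h = 0 :=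
  Iff.rfl

lemma myPerp_sup (H K : AddSubgroup G) : myPerp B (H ⊔ K) = myPerp B H ⊓ myPerp B K := by
  have key : ∀ (S : AddSubgroup G) (x : G), x ∈ myPerp B S ↔ S ≤ (B x).ker := by
    intro S x
    constructor
    · intro hx s hs; exact hx s hs
    · intro hx s hs; exact hx hs
  ext x
  rw [AddSubgroup.mem_inf, key, key, key, sup_le_iff]

lemma myPerp_anti {H K : AddSubgroup G} (h : H ≤ K) : myPerp B K ≤ myPerp B H :=
  fun _ hx s hs => hx s (h hs)

lemma myPerp_myPerp (hsurj : Function.Surjective ⇑B)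
    (hanti : ∀ x y : G, B x y = -B y x) (H : AddSubgroup G) :
    myPerp B (myPerp B H) = H := by
  ext x
  constructor
  · intro hx
    by_contra hxH
    have h0 : (QuotientAddGroup.mk x : G ⧸ H) ≠ 0 := by
      rwa [ne_eq, QuotientAddGroup.eq_zero_iff]
    obtain ⟨c, hc⟩ := exists_char_real h0
    obtain ⟨y, hy⟩ := hsurj (c.comp (QuotientAddGroup.mk' H))
    have hyH : y ∈ myPerp B H := by
      intro h hh
      rw [hy]
      simp [(QuotientAddGroup.eq_zero_iff h).2 hh]
    have : B x y = 0 := hx y hyH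
    rw [hanti, neg_eq_zero, hy] at this
    exact hc this
  · intro hx y hy
    rw [hanti]
    rw [hy x hx, neg_zero]

lemma myPerp_inf (hsurj : Function.Surjective ⇑B)
    (hanti : ∀ x y : G, B x y = -B y x) (H K : AddSubgroup G) :
    myPerp B (H ⊓ K) = myPerp B H ⊔ myPerp B K := by
  conv_lhs => rw [← myPerp_myPerp B hsurj hanti H, ← myPerp_myPerp B hsurj hanti K,
    ← myPerp_sup, myPerp_myPerp B hsurj hanti]

end Perp

noncomputable def auxF {G : Type*} [AddCommGroup G] (B : G →+ G →+ AddCircle (1 : ℝ))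
    (S : AddSubgroup G) (p₃ : ↥S →+ G) : ↥S →+ ↥S →+ AddCircle (1 : ℝ) where
  toFun k := (B (k : G)).comp p₃
  map_zero' := by ext k'; simp
  map_add' := by intro a b; ext k'; simp

@[simp] lemma auxF_apply {G : Type*} [AddCommGroup G] (B : G →+ G →+ AddCircle (1 : ℝ))
    (S : AddSubgroup G) (p₃ : ↥S →+ G) (k k' : ↥S) :
    auxF B S p₃ k k' = B (k : G) (p₃ k') := rfl

noncomputable def quotPair {S C : Type*} [AddCommGroup S] [AddCommGroup C] (F : S →+ S →+ C)
    (N : AddSubgroup S) (hsymm : ∀ k k', F k k' = F k' k)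
    (hN : ∀ k ∈ N, ∀ k', F k k' = 0) : S ⧸ N →+ S ⧸ N →+ C := by
  refine QuotientAddGroup.lift N
    { toFun := fun k => QuotientAddGroup.lift N (F k)
        (fun n hn => show F k n = 0 by rw [hsymm]; exact hN n hn k)
      map_zero' := ?_
      map_add' := ?_ } ?_
  · refine DFunLike.ext _ _ fun u => ?_
    induction u using QuotientAddGroup.induction_on with
    | H k' => simp
  · intro a b
    refine DFunLike.ext _ _ fun u => ?_
    induction u using QuotientAddGroup.induction_on with
    | H k' => simp; exact rfl
  · intro n hn
    refine DFunLike.ext _ _ fun u => ?_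
    induction u using QuotientAddGroup.induction_on with
    | H k' => exact hN n hn k'

@[simp] lemma quotPair_mk {S C : Type*} [AddCommGroup S] [AddCommGroup C] (F : S →+ S →+ C)
    (N : AddSubgroup S) (hsymm : ∀ k k', F k k' = F k' k)
    (hN : ∀ k ∈ N, ∀ k', F k k' = 0) (k k' : S) :
    quotPair F N hsymm hN (QuotientAddGroup.mk k) (QuotientAddGroup.mk k') = F k k' := rfl

/-- For Lagrangian subgroups `L₁, L₂, L₃` of a finite abelian group with perfect alternating
pairing `B` and a splitting pair `(p₁, p₃)` for `S₂ = L₂ ⊓ (L₁ ⊔ L₃)`: (i) the pairing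
`B₃₂₁(k,k') = B (p₁ k) (p₃ k')` equals `B k (p₃ k')` and `B (p₁ k) k'`; (ii) it is symmetric;
(iii) its radical is `(L₁ ⊓ L₂) ⊔ (L₂ ⊓ L₃)`; consequently it induces a non-degenerate symmetric
pairing on `U₂ = S₂ ⧸ ((L₁ ⊓ L₂) ⊔ (L₂ ⊓ L₃))`. -/
theorem stmt11 {G : Type*} [AddCommGroup G] [Finite G]
    (B : G →+ G →+ AddCircle (1 : ℝ))
    (hperf : Function.Bijective ⇑B)
    (halt : ∀ g : G, B g g = 0)
    (L₁ L₂ L₃ : AddSubgroup G)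
    (hL₁ : ∀ x : G, x ∈ L₁ ↔ ∀ l ∈ L₁, B x l = 0)
    (hL₂ : ∀ x : G, x ∈ L₂ ↔ ∀ l ∈ L₂, B x l = 0)
    (hL₃ : ∀ x : G, x ∈ L₃ ↔ ∀ l ∈ L₃, B x l = 0)
    (p₁ p₃ : ↥(L₂ ⊓ (L₁ ⊔ L₃)) →+ G)
    (hp₁ : ∀ k : ↥(L₂ ⊓ (L₁ ⊔ L₃)), p₁ k ∈ L₁)
    (hp₃ : ∀ k : ↥(L₂ ⊓ (L₁ ⊔ L₃)), p₃ k ∈ L₃)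
    (hsplit : ∀ k : ↥(L₂ ⊓ (L₁ ⊔ L₃)), (k : G) = p₁ k + p₃ k) :
    (∀ k k' : ↥(L₂ ⊓ (L₁ ⊔ L₃)),
      B (p₁ k) (p₃ k') = B (k : G) (p₃ k') ∧ B (p₁ k) (p₃ k') = B (p₁ k) (k' : G)) ∧
    (∀ k k' : ↥(L₂ ⊓ (L₁ ⊔ L₃)), B (k : G) (p₃ k') = B (k' : G) (p₃ k)) ∧
    (∀ k : ↥(L₂ ⊓ (L₁ ⊔ L₃)),
      (∀ k' : ↥(L₂ ⊓ (L₁ ⊔ L₃)), B (k : G) (p₃ k') = 0) →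
      (k : G) ∈ (L₁ ⊓ L₂) ⊔ (L₂ ⊓ L₃)) ∧
    ∃ B' : (↥(L₂ ⊓ (L₁ ⊔ L₃)) ⧸ ((L₁ ⊓ L₂) ⊔ (L₂ ⊓ L₃)).addSubgroupOf (L₂ ⊓ (L₁ ⊔ L₃))) →
           (↥(L₂ ⊓ (L₁ ⊔ L₃)) ⧸ ((L₁ ⊓ L₂) ⊔ (L₂ ⊓ L₃)).addSubgroupOf (L₂ ⊓ (L₁ ⊔ L₃))) →
           AddCircle (1 : ℝ),
      (∀ k k' : ↥(L₂ ⊓ (L₁ ⊔ L₃)),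
        B' (QuotientAddGroup.mk k) (QuotientAddGroup.mk k') = B (p₁ k) (p₃ k')) ∧
      (∀ u v, B' u v = B' v u) ∧
      (∀ u, (∀ v, B' u v = 0) → u = 0) := by
  have hanti : ∀ x y : G, B x y = -B y x := by
    intro x y
    have h := halt (x + y)
    simp only [map_add, AddMonoidHom.add_apply, halt x, halt y, zero_add, add_zero] at h
    exact eq_neg_of_add_eq_zero_right h
  have z₁ : ∀ a b : G, a ∈ L₁ → b ∈ L₁ → B a b = 0 := fun a b ha hb => (hL₁ a).1 ha b hb
  have z₂ : ∀ a b : G, a ∈ L₂ → b ∈ L₂ → B a b = 0 := fun a b ha hb => (hL₂ a).1 ha b hb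
  have z₃ : ∀ a b : G, a ∈ L₃ → b ∈ L₃ → B a b = 0 := fun a b ha hb => (hL₃ a).1 ha b hb
  have e₁ : myPerp B L₁ = L₁ := by ext x; exact (hL₁ x).symm
  have e₂ : myPerp B L₂ = L₂ := by ext x; exact (hL₂ x).symm
  have e₃ : myPerp B L₃ = L₃ := by ext x; exact (hL₃ x).symm
  -- part (i)
  have h1 : ∀ k k' : ↥(L₂ ⊓ (L₁ ⊔ L₃)), B (k : G) (p₃ k') = B (p₁ k) (p₃ k') := by
    intro k k'
    rw [hsplit k, map_add, AddMonoidHom.add_apply, z₃ _ _ (hp₃ k) (hp₃ k'), add_zero]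
  have h2 : ∀ k k' : ↥(L₂ ⊓ (L₁ ⊔ L₃)), B (p₁ k) (k' : G) = B (p₁ k) (p₃ k') := by
    intro k k'
    rw [hsplit k', map_add, z₁ _ _ (hp₁ k) (hp₁ k'), zero_add]
  -- part (ii)
  have hsym : ∀ k k' : ↥(L₂ ⊓ (L₁ ⊔ L₃)), B (k : G) (p₃ k') = B (k' : G) (p₃ k) := by
    intro k k'
    have e0 : B (k : G) (p₁ k' + p₃ k') = 0 := by
      rw [← hsplit k']; exact z₂ _ _ k.2.1 k'.2.1
    rw [map_add] at e0
    have eA : B (k : G) (p₃ k') = -B (k : G) (p₁ k') := eq_neg_of_add_eq_zero_right e0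
    have eB : B (k : G) (p₁ k') = -B (p₁ k') (p₃ k) := by
      rw [hanti, h2 k' k]
    rw [eA, eB, neg_neg, ← h1 k' k]
  -- part (iii)
  have hrad : ∀ k : ↥(L₂ ⊓ (L₁ ⊔ L₃)),
      (∀ k' : ↥(L₂ ⊓ (L₁ ⊔ L₃)), B (k : G) (p₃ k') = 0) →
      (k : G) ∈ (L₁ ⊓ L₂) ⊔ (L₂ ⊓ L₃) := by
    intro k hk
    have hp₃S : p₃ k ∈ myPerp B (L₂ ⊓ (L₁ ⊔ L₃)) := by
      intro s hs
      rw [hanti, neg_eq_zero]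
      calc B s (p₃ k) = B ((⟨s, hs⟩ : ↥(L₂ ⊓ (L₁ ⊔ L₃))) : G) (p₃ k) := rfl
        _ = B (k : G) (p₃ ⟨s, hs⟩) := (hsym ⟨s, hs⟩ k)
        _ = 0 := hk _
    have e : myPerp B (L₂ ⊓ (L₁ ⊔ L₃)) = L₂ ⊔ (L₁ ⊓ L₃) := by
      rw [myPerp_inf B hperf.2 hanti, myPerp_sup, e₁, e₂, e₃]
    rw [e] at hp₃S
    obtain ⟨y, hy, z, hz, hyz⟩ := AddSubgroup.mem_sup.1 hp₃S
    have hb2 : p₃ k - z ∈ L₂ := by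
      rw [show p₃ k - z = y by rw [← hyz]; abel]; exact hy
    have hb3 : p₃ k - z ∈ L₃ := sub_mem (hp₃ k) hz.2
    have ha1 : p₁ k + z ∈ L₁ := add_mem (hp₁ k) hz.1
    have ha2 : p₁ k + z ∈ L₂ := by
      have : p₁ k + z = (k : G) - (p₃ k - z) := by rw [hsplit k]; abel
      rw [this]; exact sub_mem k.2.1 hb2
    exact AddSubgroup.mem_sup.2 ⟨p₁ k + z, ⟨ha1, ha2⟩, p₃ k - z, ⟨hb2, hb3⟩,
      by rw [hsplit k]; abel⟩
  refine ⟨fun k k' => ⟨(h1 k k').symm, by rw [← h2 k k']⟩, hsym, hrad, ?_⟩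
  -- the quotient pairing
  set N := ((L₁ ⊓ L₂) ⊔ (L₂ ⊓ L₃)).addSubgroupOf (L₂ ⊓ (L₁ ⊔ L₃)) with hNdef
  have hFsymm : ∀ k k', auxF B (L₂ ⊓ (L₁ ⊔ L₃)) p₃ k k' = auxF B (L₂ ⊓ (L₁ ⊔ L₃)) p₃ k' k := by
    intro k k'; simpa using hsym k k'
  have hFN : ∀ k ∈ N, ∀ k', auxF B (L₂ ⊓ (L₁ ⊔ L₃)) p₃ k k' = 0 := by
    intro k hk k'
    rw [AddSubgroup.mem_addSubgroupOf] at hk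
    obtain ⟨a, ha, b, hb, hab⟩ := AddSubgroup.mem_sup.1 hk
    have hA : B a (p₃ k') = 0 := by
      have h0 : B a (p₁ k' + p₃ k') = 0 := by
        rw [← hsplit k']; exact z₂ _ _ ha.2 k'.2.1
      rw [map_add, z₁ _ _ ha.1 (hp₁ k'), zero_add] at h0
      exact h0
    have hB : B b (p₃ k') = 0 := z₃ _ _ hb.2 (hp₃ k')
    rw [auxF_apply, ← hab, map_add, AddMonoidHom.add_apply, hA, hB, add_zero]
  refine ⟨fun u v => quotPair (auxF B (L₂ ⊓ (L₁ ⊔ L₃)) p₃) N hFsymm hFN u v, ?_, ?_, ?_⟩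
  · intro k k'
    simp only [quotPair_mk, auxF_apply]
    exact h1 k k'
  · intro u v
    induction u using QuotientAddGroup.induction_on with
    | H k =>
      induction v using QuotientAddGroup.induction_on with
      | H k' => simp only [quotPair_mk]; exact hFsymm k k'
  · intro u hu
    induction u using QuotientAddGroup.induction_on with
    | H k =>
      have hk : ∀ k' : ↥(L₂ ⊓ (L₁ ⊔ L₃)), B (k : G) (p₃ k') = 0 := by
        intro k'
        have := hu (QuotientAddGroup.mk k')
        simpa only [quotPair_mk, auxF_apply] using this
      exact (QuotientAddGroup.eq_zero_iff k).2 (AddSubgroup.mem_addSubgroupOf.2 (hrad k hk))
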